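/- For the basis functions χ_i(x) = L_i(x) − L_{i+2}(x), the weighted mass integrals c_{ij} = ∫_{−1}^{1} χ_j(x) χ_i(x) (x+1) dx satisfy: c_{ii} = 2/(2i+1) + 2/(2i+5), c_{i,i+1} = 2/((2i+1)(2i+5)) + 2(i+3)/((2i+5)(2i+7)), c_{i,i+2} = −2/(2i+5), c_{i,i+3} = −2(i+3)/((2i+5)(2i+7)), and c_{ij} = 0 for |i − j| ≥ 4. -/

import Mathlib

open Polynomial intervalIntegral

/-- The `n`-th Legendre polynomial via Rodrigues' formula. -/
noncomputable def legendre (n : ℕ) : Polynomial ℝ :=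
  Polynomial.C ((2 ^ n * n.factorial : ℝ)⁻¹) * Polynomial.derivative^[n] ((X ^ 2 - 1) ^ n)

/-- χ_i = L_i − L_{i+2}. -/
noncomputable def chi (i : ℕ) : Polynomial ℝ := legendre i - legendre (i + 2)

/-- c_{ij} = ∫_{-1}^1 χ_j χ_i (x+1) dx. -/
noncomputable def cMat (i j : ℕ) : ℝ :=
  ∫ x in (-1 : ℝ)..1, (chi j).eval x * (chi i).eval x * (x + 1)

noncomputable def Pint (p : Polynomial ℝ) : ℝ := ∫ x in (-1:ℝ)..1, p.eval x

lemma Pint_add (p q : Polynomial ℝ) : Pint (p + q) = Pint p + Pint q := by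
  unfold Pint
  simp only [eval_add]
  exact intervalIntegral.integral_add (p.continuous.intervalIntegrable _ _)
    (q.continuous.intervalIntegrable _ _)

lemma Pint_C_mul (c : ℝ) (p : Polynomial ℝ) : Pint (C c * p) = c * Pint p := by
  unfold Pint
  simp only [eval_mul, eval_C]
  exact intervalIntegral.integral_const_mul c _

lemma Pint_derivative (p : Polynomial ℝ) :
    Pint (derivative p) = p.eval 1 - p.eval (-1) := by
  unfold Pint
  apply intervalIntegral.integral_deriv_eq_sub' (fun x => p.eval x)
  · funext x; exact Polynomial.deriv p
  · intro x _; exact p.differentiable.differentiableAt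
  · exact (derivative p).continuous.continuousOn

lemma ibp (f g : Polynomial ℝ) (h1 : f.eval 1 = 0) (h2 : f.eval (-1) = 0) :
    Pint (derivative f * g) = - Pint (f * derivative g) := by
  have hd := Pint_derivative (f * g)
  rw [derivative_mul, Pint_add] at hd
  simp only [eval_mul, h1, h2, zero_mul, sub_zero] at hd
  linarith

lemma pow_struct (n : ℕ) : ∀ k, k ≤ n → ∃ q : Polynomial ℝ,
    derivative^[k] ((X ^ 2 - 1) ^ n) = (X ^ 2 - 1) ^ (n - k) * q := by
  intro k
  induction k with
  | zero => intro _; exact ⟨1, by simp⟩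
  | succ k ih =>
    intro hk
    obtain ⟨q, hq⟩ := ih (Nat.le_of_succ_le hk)
    have hnk : n - k = (n - (k + 1)) + 1 := by omega
    refine ⟨(C (((n - (k + 1) : ℕ) : ℝ) + 1)) * (2 * X) * q + (X ^ 2 - 1) * derivative q, ?_⟩
    rw [Function.iterate_succ_apply', hq, derivative_mul, derivative_pow]
    have hd : derivative (X ^ 2 - 1 : Polynomial ℝ) = 2 * X := by
      simp [derivative_X_pow, map_ofNat, one_add_one_eq_two]
    rw [hd, hnk]
    have h2 : (C 2 : Polynomial ℝ) = 2 := map_ofNat C 2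
    push_cast [h2]
    ring

lemma vanish (n k : ℕ) (hk : k < n) :
    (derivative^[k] ((X ^ 2 - 1 : Polynomial ℝ) ^ n)).eval 1 = 0 ∧
    (derivative^[k] ((X ^ 2 - 1 : Polynomial ℝ) ^ n)).eval (-1) = 0 := by
  obtain ⟨q, hq⟩ := pow_struct n k hk.le
  have hnk : n - k ≠ 0 := by omega
  constructor <;> rw [hq] <;> simp [zero_pow hnk]

lemma iter_ibp (n : ℕ) (g : Polynomial ℝ) : ∀ j, j ≤ n →
    Pint (derivative^[n] ((X ^ 2 - 1) ^ n) * g)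
      = (-1) ^ j * Pint (derivative^[n - j] ((X ^ 2 - 1) ^ n) * derivative^[j] g) := by
  intro j
  induction j with
  | zero => intro _; simp
  | succ j ih =>
    intro hj
    rw [ih (Nat.le_of_succ_le hj)]
    have hs : n - j = (n - (j + 1)) + 1 := by omega
    have hv := vanish n (n - (j + 1)) (by omega)
    rw [hs, Function.iterate_succ_apply', ibp _ _ hv.1 hv.2]
    rw [show derivative ((derivative)^[j] g) = (derivative)^[j+1] g from
      (Function.iterate_succ_apply' derivative j g).symm]
    ring

lemma Jval (n : ℕ) : Pint ((X ^ 2 - 1) ^ n)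
    = (-1) ^ n * 2 ^ (2 * n + 1) * (n.factorial : ℝ) ^ 2 / (2 * n + 1).factorial := by
  induction n with
  | zero =>
    unfold Pint
    norm_num
  | succ n ih =>
    have h2 : (C 2 : Polynomial ℝ) = 2 := map_ofNat C 2
    have hid : derivative (X * (X ^ 2 - 1) ^ (n + 1) : Polynomial ℝ)
        = C ((2 * n + 3 : ℕ) : ℝ) * (X ^ 2 - 1) ^ (n + 1)
          + C ((2 * n + 2 : ℕ) : ℝ) * (X ^ 2 - 1) ^ n := by
      rw [derivative_mul, derivative_pow, derivative_X]
      have hd : derivative (X ^ 2 - 1 : Polynomial ℝ) = 2 * X := by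
        simp [derivative_X_pow, map_ofNat, one_add_one_eq_two]
      rw [hd]
      simp only [map_natCast]
      push_cast [h2]
      rw [show (X^2 - 1 : Polynomial ℝ)^(n+1) = (X^2-1)^n * (X^2-1) from pow_succ _ _]
      ring
    have hP := Pint_derivative (X * (X ^ 2 - 1) ^ (n + 1) : Polynomial ℝ)
    rw [hid, Pint_add, Pint_C_mul, Pint_C_mul, ih] at hP
    simp only [eval_mul, eval_X, eval_pow, eval_sub, eval_one] at hP
    norm_num at hP
    -- hP : (2n+3) * Pint ((X^2-1)^(n+1)) + (2n+2) * J_n = 0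
    have hf1 : ((2 * (n + 1) + 1).factorial : ℝ)
        = (2 * n + 3) * ((2 * n + 2) * (2 * n + 1).factorial) := by
      have : 2 * (n + 1) + 1 = (2 * n + 2) + 1 := by ring
      rw [this, Nat.factorial_succ, show 2*n+2 = (2*n+1)+1 from rfl, Nat.factorial_succ]
      push_cast
      ring
    have hf2 : ((n + 1).factorial : ℝ) = (n + 1) * n.factorial := by
      rw [Nat.factorial_succ]; push_cast; ring
    have hne1 : ((2 * n + 1).factorial : ℝ) ≠ 0 := Nat.cast_ne_zero.2 (Nat.factorial_ne_zero _)
    have hne2 : (2 * (n:ℝ) + 3) ≠ 0 := by positivity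
    rw [hf1, hf2]
    push_cast at hP ⊢
    field_simp at hP ⊢
    linear_combination 2 * hP

lemma iter_deriv_eq_C : ∀ (n : ℕ) (g : Polynomial ℝ), g.natDegree ≤ n →
    derivative^[n] g = C ((n.factorial : ℝ) * g.coeff n) := by
  intro n
  induction n with
  | zero =>
    intro g hg
    rw [Polynomial.eq_C_of_natDegree_le_zero hg]
    simp
  | succ n ih =>
    intro g hg
    rw [Function.iterate_succ_apply, ih (derivative g)
      ((natDegree_derivative_le g).trans (by omega))]
    rw [coeff_derivative, Nat.factorial_succ]
    push_cast
    ring_nf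

lemma natDegree_legendre_le (n : ℕ) : (legendre n).natDegree ≤ n := by
  unfold legendre
  refine (natDegree_C_mul_le _ _).trans ?_
  refine (natDegree_iterate_derivative _ _).trans ?_
  have h1 : (X ^ 2 - 1 : Polynomial ℝ).natDegree ≤ 2 := by
    refine (natDegree_sub_le _ _).trans ?_
    simp [natDegree_X_pow]
  have h2 : ((X ^ 2 - 1 : Polynomial ℝ) ^ n).natDegree ≤ 2 * n :=
    natDegree_pow_le.trans (by calc n * (X ^ 2 - 1 : Polynomial ℝ).natDegree
        ≤ n * 2 := Nat.mul_le_mul_left n h1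
      _ = 2 * n := by ring)
  omega

/-- Master computation: ∫ L_n g = g.coeff n * 2^(n+1) (n!)² / (2n+1)!. -/
lemma master (n : ℕ) (g : Polynomial ℝ) (hg : g.natDegree ≤ n) :
    Pint (legendre n * g)
      = g.coeff n * (2 ^ (n + 1) * (n.factorial : ℝ) ^ 2 / (2 * n + 1).factorial) := by
  unfold legendre
  rw [mul_assoc, Pint_C_mul, iter_ibp n g n le_rfl, Nat.sub_self,
    Function.iterate_zero_apply, iter_deriv_eq_C n g hg, mul_comm ((X^2-1:Polynomial ℝ)^n),
    Pint_C_mul, Jval]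
  have hne1 : ((2 * n + 1).factorial : ℝ) ≠ 0 := Nat.cast_ne_zero.2 (Nat.factorial_ne_zero _)
  have hne2 : ((n).factorial : ℝ) ≠ 0 := Nat.cast_ne_zero.2 (Nat.factorial_ne_zero _)
  field_simp
  ring_nf
  rw [show ((-1:ℝ)) ^ (n * 2) = 1 from Even.neg_one_pow ⟨n, by ring⟩]
  ring

lemma base_monic : (X ^ 2 - 1 : Polynomial ℝ).Monic := by
  have := monic_X_pow_sub_C (1 : ℝ) (n := 2) (by norm_num)
  simpa using this

lemma pow_natDegree (n : ℕ) : ((X ^ 2 - 1 : Polynomial ℝ) ^ n).natDegree = 2 * n := by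
  have h : (X ^ 2 - 1 : Polynomial ℝ).natDegree = 2 := by
    have := natDegree_X_pow_sub_C (n := 2) (r := (1 : ℝ))
    simpa using this
  rw [base_monic.natDegree_pow, h, Nat.mul_comm]

lemma pow_coeff_top (n : ℕ) : ((X ^ 2 - 1 : Polynomial ℝ) ^ n).coeff (n + n) = 1 := by
  have := (base_monic.pow n).coeff_natDegree
  rwa [pow_natDegree, show 2 * n = n + n from by ring] at this

lemma pow_coeff_odd (n : ℕ) : ∀ m : ℕ, Odd m → ((X ^ 2 - 1 : Polynomial ℝ) ^ n).coeff m = 0 := by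
  induction n with
  | zero =>
    intro m hm
    have : m ≠ 0 := by rintro rfl; simp at hm
    simp [coeff_one, this]
  | succ n ih =>
    intro m hm
    have hexp : ((X ^ 2 - 1 : Polynomial ℝ) ^ (n + 1))
        = ((X ^ 2 - 1) ^ n) * X ^ 2 - (X ^ 2 - 1) ^ n := by ring
    rw [hexp, coeff_sub, ih m hm, sub_zero, coeff_mul_X_pow']
    obtain ⟨k, hk⟩ := hm
    by_cases h2 : 2 ≤ m
    · rw [if_pos h2]
      exact ih (m - 2) ⟨k - 1, by omega⟩
    · simp [h2]

lemma coeff_legendre_self (n : ℕ) :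
    (legendre n).coeff n = ((2 * n).factorial : ℝ) / (2 ^ n * n.factorial * n.factorial) := by
  unfold legendre
  rw [coeff_C_mul, coeff_iterate_derivative, pow_coeff_top, nsmul_eq_mul, mul_one]
  have hdesc : (n.factorial) * ((n + n).descFactorial n) = (2 * n).factorial := by
    have h := Nat.factorial_mul_descFactorial (n := n + n) (k := n) (by omega)
    rw [show n + n - n = n from by omega] at h
    rw [h, show n + n = 2 * n from by ring]
  have hne2 : ((n).factorial : ℝ) ≠ 0 := Nat.cast_ne_zero.2 (Nat.factorial_ne_zero _)
  have h2n : ((2:ℝ)) ^ n ≠ 0 := by positivity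
  field_simp
  have hc : ((2 * n).factorial : ℝ) = (n.factorial : ℝ) * ((n + n).descFactorial n : ℝ) := by
    exact_mod_cast hdesc.symm
  rw [hc]

lemma coeff_legendre_pred (n : ℕ) : (legendre (n + 1)).coeff n = 0 := by
  unfold legendre
  rw [coeff_C_mul, coeff_iterate_derivative,
    pow_coeff_odd (n + 1) (n + (n + 1)) ⟨n, by ring⟩]
  simp

lemma comp_neg_deriv (p : Polynomial ℝ) :
    (derivative p).comp (-X) = - derivative (p.comp (-X)) := by
  rw [derivative_comp]
  simp

lemma comp_neg_iter (k : ℕ) : ∀ p : Polynomial ℝ,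
    (derivative^[k] p).comp (-X) = C ((-1 : ℝ) ^ k) * derivative^[k] (p.comp (-X)) := by
  induction k with
  | zero => intro p; simp
  | succ k ih =>
    intro p
    rw [Function.iterate_succ_apply', comp_neg_deriv, ih p, derivative_C_mul,
      show derivative ((derivative)^[k] (p.comp (-X))) = (derivative)^[k+1] (p.comp (-X)) from
        (Function.iterate_succ_apply' derivative k (p.comp (-X))).symm]
    rw [pow_succ, map_mul]
    simp only [map_neg, map_one]
    ring

lemma legendre_comp_neg (n : ℕ) :
    (legendre n).comp (-X) = C ((-1 : ℝ) ^ n) * legendre n := by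
  unfold legendre
  rw [mul_comp, C_comp, comp_neg_iter]
  have hP : ((X ^ 2 - 1 : Polynomial ℝ) ^ n).comp (-X) = (X ^ 2 - 1) ^ n := by
    rw [pow_comp, sub_comp, pow_comp, X_comp, one_comp]
    ring_nf
  rw [hP]
  ring

lemma legendre_eval_neg (n : ℕ) (x : ℝ) :
    (legendre n).eval (-x) = (-1 : ℝ) ^ n * (legendre n).eval x := by
  have h := congrArg (eval x) (legendre_comp_neg n)
  rwa [eval_comp, eval_neg, eval_X, eval_mul, eval_C] at h

lemma Pint_odd (p : Polynomial ℝ) (hp : ∀ x : ℝ, p.eval (-x) = - p.eval x) :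
    Pint p = 0 := by
  have h := intervalIntegral.integral_comp_neg (a := (-1:ℝ)) (b := 1) (fun x => p.eval x)
  simp only [hp, neg_neg] at h
  rw [intervalIntegral.integral_neg] at h
  unfold Pint
  linarith [h]

lemma Pint_sub (p q : Polynomial ℝ) : Pint (p - q) = Pint p - Pint q := by
  unfold Pint
  simp only [eval_sub]
  exact intervalIntegral.integral_sub (p.continuous.intervalIntegrable _ _)
    (q.continuous.intervalIntegrable _ _)

lemma natDegree_X_mul_legendre (a : ℕ) : (X * legendre a).natDegree ≤ a + 1 := by
  refine natDegree_mul_le.trans ?_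
  have := natDegree_legendre_le a
  simp only [natDegree_X]
  omega

lemma F_self (a : ℕ) : Pint (legendre a * legendre a) = 2 / (2 * (a:ℝ) + 1) := by
  rw [master a (legendre a) (natDegree_legendre_le a), coeff_legendre_self]
  have hf : ((2 * a + 1).factorial : ℝ) = (2 * (a:ℝ) + 1) * (2 * a).factorial := by
    rw [Nat.factorial_succ]; push_cast; ring
  have h1 : ((2 * a).factorial : ℝ) ≠ 0 := Nat.cast_ne_zero.2 (Nat.factorial_ne_zero _)
  have h2 : ((a).factorial : ℝ) ≠ 0 := Nat.cast_ne_zero.2 (Nat.factorial_ne_zero _)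
  have h3 : (2:ℝ) ^ a ≠ 0 := by positivity
  have h4 : (2 * (a:ℝ) + 1) ≠ 0 := by positivity
  rw [hf]
  field_simp
  ring

lemma F_ne (a b : ℕ) (h : a ≠ b) : Pint (legendre a * legendre b) = 0 := by
  rcases Nat.lt_or_ge a b with hlt|hge
  · rw [mul_comm, master b (legendre a) ((natDegree_legendre_le a).trans hlt.le),
      coeff_eq_zero_of_natDegree_lt (lt_of_le_of_lt (natDegree_legendre_le a) hlt), zero_mul]
  · have hlt : b < a := by omega
    rw [master a (legendre b) ((natDegree_legendre_le b).trans hlt.le),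
      coeff_eq_zero_of_natDegree_lt (lt_of_le_of_lt (natDegree_legendre_le b) hlt), zero_mul]

lemma E_succ (a : ℕ) : Pint (legendre (a + 1) * (X * legendre a))
    = 2 * ((a:ℝ) + 1) / ((2 * (a:ℝ) + 1) * (2 * (a:ℝ) + 3)) := by
  rw [master (a + 1) (X * legendre a) (natDegree_X_mul_legendre a), coeff_X_mul,
    coeff_legendre_self]
  have hf : ((2 * (a + 1) + 1).factorial : ℝ)
      = (2 * (a:ℝ) + 3) * ((2 * (a:ℝ) + 2) * ((2 * (a:ℝ) + 1) * (2 * a).factorial)) := by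
    rw [show 2 * (a + 1) + 1 = ((2 * a + 1) + 1) + 1 from by ring, Nat.factorial_succ,
      Nat.factorial_succ, Nat.factorial_succ]
    push_cast; ring
  have hf2 : ((a + 1).factorial : ℝ) = ((a:ℝ) + 1) * a.factorial := by
    rw [Nat.factorial_succ]; push_cast; ring
  have h1 : ((2 * a).factorial : ℝ) ≠ 0 := Nat.cast_ne_zero.2 (Nat.factorial_ne_zero _)
  have h2 : ((a).factorial : ℝ) ≠ 0 := Nat.cast_ne_zero.2 (Nat.factorial_ne_zero _)
  have h3 : (2:ℝ) ^ a ≠ 0 := by positivity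
  have h4 : (2 * (a:ℝ) + 1) ≠ 0 := by positivity
  have h5 : (2 * (a:ℝ) + 3) ≠ 0 := by positivity
  have h6 : (2 * (a:ℝ) + 2) ≠ 0 := by positivity
  rw [hf, hf2]
  field_simp
  ring

lemma E_self (a : ℕ) : Pint (legendre a * (X * legendre a)) = 0 := by
  apply Pint_odd
  intro x
  simp only [eval_mul, eval_X, legendre_eval_neg]
  have hs : ((-1:ℝ)) ^ a * (-1) ^ a = 1 := by rw [← mul_pow]; norm_num
  linear_combination (-(x * (eval x (legendre a)) ^ 2)) * hs

lemma E_far (a b : ℕ) (h : a + 1 < b) : Pint (legendre b * (X * legendre a)) = 0 := by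
  rw [master b (X * legendre a) ((natDegree_X_mul_legendre a).trans h.le),
    coeff_eq_zero_of_natDegree_lt (lt_of_le_of_lt (natDegree_X_mul_legendre a) h), zero_mul]

lemma key (a b : ℕ) : Pint (legendre a * legendre b * (X + 1)) =
    (if a = b then 2 / (2 * (a:ℝ) + 1) else 0) +
    (if b = a + 1 then 2 * ((a:ℝ) + 1) / ((2 * (a:ℝ) + 1) * (2 * (a:ℝ) + 3))
     else if a = b + 1 then 2 * ((b:ℝ) + 1) / ((2 * (b:ℝ) + 1) * (2 * (b:ℝ) + 3)) else 0) := by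
  have hsplit : legendre a * legendre b * (X + 1)
      = legendre a * legendre b + legendre a * legendre b * X := by ring
  rw [hsplit, Pint_add]
  congr 1
  · rcases eq_or_ne a b with rfl|h
    · rw [if_pos rfl]; exact F_self a
    · rw [if_neg h]; exact F_ne a b h
  · rcases eq_or_ne b (a + 1) with rfl|h1
    · rw [if_pos rfl,
        show legendre a * legendre (a + 1) * X = legendre (a + 1) * (X * legendre a) from by ring]
      exact E_succ a
    rcases eq_or_ne a (b + 1) with heq|h2
    · rw [if_neg h1, if_pos heq, heq,
        show legendre (b + 1) * legendre b * X = legendre (b + 1) * (X * legendre b) from by ring]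
      exact E_succ b
    · rw [if_neg h1, if_neg h2]
      rcases lt_trichotomy a b with h|rfl|h
      · rw [show legendre a * legendre b * X = legendre b * (X * legendre a) from by ring]
        exact E_far a b (by omega)
      · rw [show legendre a * legendre a * X = legendre a * (X * legendre a) from by ring]
        exact E_self a
      · rw [show legendre a * legendre b * X = legendre a * (X * legendre b) from by ring]
        exact E_far b a (by omega)

lemma cMat_expand (i j : ℕ) : cMat i j =
    Pint (legendre j * legendre i * (X + 1)) - Pint (legendre j * legendre (i + 2) * (X + 1))
    - Pint (legendre (j + 2) * legendre i * (X + 1))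
    + Pint (legendre (j + 2) * legendre (i + 2) * (X + 1)) := by
  have he : cMat i j = Pint (chi j * chi i * (X + 1)) := by
    unfold cMat Pint
    simp only [eval_mul, eval_add, eval_X, eval_one]
  rw [he, show chi j * chi i * (X + 1)
      = legendre j * legendre i * (X + 1) - legendre j * legendre (i + 2) * (X + 1)
        - legendre (j + 2) * legendre i * (X + 1)
        + legendre (j + 2) * legendre (i + 2) * (X + 1) from by unfold chi; ring,
    Pint_add, Pint_sub, Pint_sub]

theorem weighted_mass_entries (i j : ℕ) :
    cMat i i = 2 / (2 * (i : ℝ) + 1) + 2 / (2 * (i : ℝ) + 5) ∧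
    cMat i (i + 1) = 2 / ((2 * (i : ℝ) + 1) * (2 * (i : ℝ) + 5))
      + 2 * ((i : ℝ) + 3) / ((2 * (i : ℝ) + 5) * (2 * (i : ℝ) + 7)) ∧
    cMat i (i + 2) = -2 / (2 * (i : ℝ) + 5) ∧
    cMat i (i + 3) = -(2 * ((i : ℝ) + 3)) / ((2 * (i : ℝ) + 5) * (2 * (i : ℝ) + 7)) ∧
    (4 ≤ |(i : ℤ) - (j : ℤ)| → cMat i j = 0) := by
  have h1 : (0:ℝ) < 2 * (i:ℝ) + 1 := by positivity
  have h3 : (0:ℝ) < 2 * (i:ℝ) + 3 := by positivity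
  have h5 : (0:ℝ) < 2 * (i:ℝ) + 5 := by positivity
  have h7 : (0:ℝ) < 2 * (i:ℝ) + 7 := by positivity
  refine ⟨?_, ?_, ?_, ?_, ?_⟩
  · rw [cMat_expand, key, key, key, key]
    norm_num [add_assoc]
    push_cast
    ring
  · rw [cMat_expand, key, key, key, key]
    norm_num [add_assoc]
    push_cast
    field_simp
    ring
  · rw [cMat_expand, key, key, key, key]
    norm_num [add_assoc]
    push_cast
    field_simp
    ring
  · rw [cMat_expand, key, key, key, key]
    norm_num [add_assoc]
    push_cast
    field_simp
    ring
  · intro habs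
    have hsep : i + 4 ≤ j ∨ j + 4 ≤ i := by
      rcases le_total ((i:ℤ) - j) 0 with hc|hc
      · rw [abs_of_nonpos hc] at habs; left; omega
      · rw [abs_of_nonneg hc] at habs; right; omega
    rw [cMat_expand, key, key, key, key]
    rcases hsep with hs|hs
    all_goals
      rw [if_neg (by omega : ¬ j = i), if_neg (by omega : ¬ i = j + 1),
        if_neg (by omega : ¬ j = i + 1),
        if_neg (by omega : ¬ j = i + 2), if_neg (by omega : ¬ i + 2 = j + 1),
        if_neg (by omega : ¬ j = i + 2 + 1),
        if_neg (by omega : ¬ j + 2 = i), if_neg (by omega : ¬ i = j + 2 + 1),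
        if_neg (by omega : ¬ j + 2 = i + 1),
        if_neg (by omega : ¬ j + 2 = i + 2), if_neg (by omega : ¬ i + 2 = j + 2 + 1),
        if_neg (by omega : ¬ j + 2 = i + 2 + 1)]
      norm_num
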